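/- Under Assumption 1, the competitive spectral radius satisfies ρ = max_{v ∈ Lip₁(X)} inf_{x ∈ X} (Sv(x) − v(x)), and the maximum over v is attained. -/

import Mathlib

open Set Filter

/-- The Shapley operator of the escape rate game:
`S v (x) = inf_{a ∈ 𝒜} sup_{b ∈ ℬ} v (T_{ab}(x))`. -/
noncomputable def shapley {X : Type*} {E : Type*} (A B : Set E)
    (T : E → E → X → X) : (X → ℝ) → X → ℝ :=
  fun v x => ⨅ a : A, ⨆ b : B, v (T a b x)

private lemma ciSup_addc {ι : Sort*} [Nonempty ι] {f : ι → ℝ} (hf : BddAbove (Set.range f))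
    (c : ℝ) : (⨆ i, (f i + c)) = (⨆ i, f i) + c := by
  have hbdd : BddAbove (Set.range fun i => f i + c) := by
    obtain ⟨m, hm⟩ := hf
    exact ⟨m + c, by rintro y ⟨i, rfl⟩; exact add_le_add_left (hm ⟨i, rfl⟩) c⟩
  apply le_antisymm
  · exact ciSup_le fun i => add_le_add_left (le_ciSup hf i) c
  · have : (⨆ i, f i) ≤ (⨆ i, (f i + c)) - c :=
      ciSup_le fun i => le_sub_iff_add_le.2 (le_ciSup hbdd i)
    linarith

private lemma ciInf_addc {ι : Sort*} [Nonempty ι] {f : ι → ℝ} (hf : BddBelow (Set.range f))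
    (c : ℝ) : (⨅ i, (f i + c)) = (⨅ i, f i) + c := by
  have hbdd : BddBelow (Set.range fun i => f i + c) := by
    obtain ⟨m, hm⟩ := hf
    exact ⟨m + c, by rintro y ⟨i, rfl⟩; exact add_le_add_left (hm ⟨i, rfl⟩) c⟩
  apply le_antisymm
  · have : (⨅ i, (f i + c)) - c ≤ ⨅ i, f i :=
      le_ciInf fun i => sub_le_iff_le_add.2 (ciInf_le hbdd i)
    linarith
  · exact le_ciInf fun i => add_le_add_left (ciInf_le hf i) c

/-- under Assumption 1, the competitive spectral radius satisfies
`ρ = max_{v ∈ Lip₁(X)} inf_{x ∈ X} (S v (x) - v (x))`, the maximum being attained.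
(The inner infimum is encoded via `IsGLB`, so that only functions `v` for which the
infimum is finite contribute.) -/
theorem stmt_4 {X : Type*} [MetricSpace X] [Nonempty X] {E : Type*} [MetricSpace E]
    (d : X → X → ℝ)
    (htri : ∀ x y z, d x z ≤ d x y + d y z)
    (hcompat : ∀ x y, dist x y = max (d x y) (d y x))
    (A B : Set E) (hAc : IsCompact A) (hAne : A.Nonempty)
    (hBc : IsCompact B) (hBne : B.Nonempty)
    (T : E → E → X → X)
    (hTnexp : ∀ a ∈ A, ∀ b ∈ B, ∀ x y, d (T a b x) (T a b y) ≤ d x y)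
    (hconta : ∀ x : X, ∀ b ∈ B, ContinuousOn (fun a => T a b x) A)
    (hcontb : ∀ x : X, ∀ a ∈ A, ContinuousOn (fun b => T a b x) B)
    (hcomp : ∀ K : Set X, IsCompact K →
      IsCompact {z | ∃ a ∈ A, ∃ b ∈ B, ∃ x ∈ K, z = T a b x})
    (xb : X) (ρ : ℝ)
    (hρ : Tendsto (fun k : ℕ => (shapley A B T)^[k] (fun y => d y xb) xb / (k : ℝ))
      atTop (nhds ρ)) :
    IsGreatest {r : ℝ | ∃ v : X → ℝ, (∀ x y, v x - v y ≤ d x y) ∧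
      IsGLB {s : ℝ | ∃ x : X, s = shapley A B T v x - v x} r} ρ := by
  classical
  haveI : Nonempty A := hAne.to_subtype
  haveI : Nonempty B := hBne.to_subtype
  -- basic facts about the hemi-metric
  have hdd : ∀ x y : X, d x y ≤ dist x y := fun x y =>
    (le_max_left _ _).trans (hcompat x y).ge
  have hdd' : ∀ x y : X, d x y ≤ dist y x := fun x y => by
    rw [dist_comm]; exact hdd x y
  have hdxx : ∀ x : X, d x x = 0 := by
    intro x
    have h := hcompat x x
    rw [dist_self, max_self] at h
    exact h.symm
  -- a radius function controlling one-step displacements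
  have hRex : ∀ x : X, ∃ R : ℝ, 0 ≤ R ∧ ∀ a ∈ A, ∀ b ∈ B, dist (T a b x) x ≤ R := by
    intro x
    have hK : IsCompact {z | ∃ a ∈ A, ∃ b ∈ B, ∃ x' ∈ ({x} : Set X), z = T a b x'} :=
      hcomp _ isCompact_singleton
    obtain ⟨r, hr⟩ := hK.isBounded.subset_closedBall x
    refine ⟨max r 0, le_max_right _ _, fun a ha b hb => ?_⟩
    have : T a b x ∈ {z | ∃ a ∈ A, ∃ b ∈ B, ∃ x' ∈ ({x} : Set X), z = T a b x'} :=
      ⟨a, ha, b, hb, x, rfl, rfl⟩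
    have := hr this
    simp only [Metric.mem_closedBall] at this
    exact this.trans (le_max_left _ _)
  choose R hR0 hRb using hRex
  -- pick elements
  obtain ⟨a₀, ha₀⟩ := hAne
  obtain ⟨b₀, hb₀⟩ := hBne
  -- bounds for Lipschitz functions under one step
  have hvub : ∀ v : X → ℝ, (∀ x y, v x - v y ≤ d x y) → ∀ x : X, ∀ a ∈ A, ∀ b ∈ B,
      v (T a b x) ≤ v x + R x := by
    intro v hv x a ha b hb
    have h1 := hv (T a b x) x
    have h2 := (hdd (T a b x) x).trans (hRb x a ha b hb)
    linarith
  have hvlb : ∀ v : X → ℝ, (∀ x y, v x - v y ≤ d x y) → ∀ x : X, ∀ a ∈ A, ∀ b ∈ B,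
      v x - R x ≤ v (T a b x) := by
    intro v hv x a ha b hb
    have h1 := hv x (T a b x)
    have h2 := (hdd' x (T a b x)).trans (hRb x a ha b hb)
    linarith
  have hBddA : ∀ v : X → ℝ, (∀ x y, v x - v y ≤ d x y) → ∀ (x : X) (a : A),
      BddAbove (Set.range fun b : B => v (T a b x)) := by
    intro v hv x a
    exact ⟨v x + R x, by rintro y ⟨b, rfl⟩; exact hvub v hv x a a.2 b b.2⟩
  have hBddI : ∀ v : X → ℝ, (∀ x y, v x - v y ≤ d x y) → ∀ x : X,
      BddBelow (Set.range fun a : A => ⨆ b : B, v (T a b x)) := by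
    intro v hv x
    refine ⟨v x - R x, ?_⟩
    rintro y ⟨a, rfl⟩
    exact (hvlb v hv x a a.2 b₀ hb₀).trans (le_ciSup (hBddA v hv x a) ⟨b₀, hb₀⟩)
  have hSle : ∀ v : X → ℝ, (∀ x y, v x - v y ≤ d x y) → ∀ (x : X) (a : A),
      shapley A B T v x ≤ ⨆ b : B, v (T a b x) := by
    intro v hv x a
    exact ciInf_le (hBddI v hv x) a
  have hleS : ∀ (v : X → ℝ) (x : X) (c : ℝ),
      (∀ a : A, c ≤ ⨆ b : B, v (T a b x)) → c ≤ shapley A B T v x := by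
    intro v x c h
    exact le_ciInf h
  -- S preserves the constant-shift
  have hSconst : ∀ v : X → ℝ, (∀ x y, v x - v y ≤ d x y) → ∀ (c : ℝ) (x : X),
      shapley A B T (fun y => v y + c) x = shapley A B T v x + c := by
    intro v hv c x
    have h1 : ∀ a : A, (⨆ b : B, (v (T a b x) + c)) = (⨆ b : B, v (T a b x)) + c :=
      fun a => ciSup_addc (hBddA v hv x a) c
    calc shapley A B T (fun y => v y + c) x
        = ⨅ a : A, ((⨆ b : B, v (T a b x)) + c) := by
          simp only [shapley]
          exact iInf_congr h1
      _ = (⨅ a : A, ⨆ b : B, v (T a b x)) + c := ciInf_addc (hBddI v hv x) c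
      _ = shapley A B T v x + c := rfl
  -- monotonicity of S
  have hSmono : ∀ v w : X → ℝ, (∀ x y, v x - v y ≤ d x y) → (∀ x y, w x - w y ≤ d x y) →
      (∀ y, v y ≤ w y) → ∀ x, shapley A B T v x ≤ shapley A B T w x := by
    intro v w hv hw hvw x
    refine ciInf_mono (hBddI v hv x) fun a => ?_
    exact ciSup_mono (hBddA w hw x a) fun b => hvw _
  -- S preserves Lip₁
  have hSLip : ∀ v : X → ℝ, (∀ x y, v x - v y ≤ d x y) →
      ∀ x y, shapley A B T v x - shapley A B T v y ≤ d x y := by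
    intro v hv x y
    rw [sub_le_iff_le_add]
    refine le_of_forall_pos_le_add ?_
    intro ε hε
    have h1 : shapley A B T v y < shapley A B T v y + ε := by linarith
    obtain ⟨a, haa⟩ := exists_lt_of_ciInf_lt h1
    have h2 : shapley A B T v x ≤ ⨆ b : B, v (T a b x) := hSle v hv x a
    have h3 : (⨆ b : B, v (T a b x)) ≤ (⨆ b : B, v (T a b y)) + d x y := by
      refine ciSup_le fun b => ?_
      have h4 : v (T a b x) - v (T a b y) ≤ d (T a b x) (T a b y) := hv _ _
      have h5 : d (T a b x) (T a b y) ≤ d x y := hTnexp a a.2 b b.2 x y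
      have h6 : v (T a b y) ≤ ⨆ b : B, v (T a b y) := le_ciSup (hBddA v hv y a) b
      linarith
    calc shapley A B T v x ≤ (⨆ b : B, v (T a b y)) + d x y := h2.trans h3
      _ ≤ d x y + shapley A B T v y + ε := by linarith [haa.le]
  -- lower bound for S
  have hSlb : ∀ v : X → ℝ, (∀ x y, v x - v y ≤ d x y) → ∀ x : X,
      v x - R x ≤ shapley A B T v x := by
    intro v hv x
    refine hleS v x _ fun a => ?_
    exact (hvlb v hv x a a.2 b₀ hb₀).trans (le_ciSup (hBddA v hv x a) ⟨b₀, hb₀⟩)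
  -- the value iterates
  set u : ℕ → X → ℝ := fun k => (shapley A B T)^[k] (fun y => d y xb) with hu_def
  have huS : ∀ k, u (k + 1) = shapley A B T (u k) := by
    intro k
    simp only [hu_def, Function.iterate_succ_apply']
  have huLip : ∀ k, ∀ x y, u k x - u k y ≤ d x y := by
    intro k
    induction k with
    | zero =>
      intro x y
      simp only [hu_def, Function.iterate_zero_apply]
      have := htri x y xb
      linarith
    | succ n ih =>
      rw [huS n]
      exact hSLip (u n) ih
  -- subadditivity of k ↦ u k xb
  have hgen : ∀ k m (y : X), u (k + m) y ≤ u k xb + u m y := by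
    intro k m
    induction m with
    | zero =>
      intro y
      have h1 := huLip k y xb
      have h2 : u 0 y = d y xb := by simp [hu_def]
      rw [Nat.add_zero, h2]
      linarith
    | succ n ih =>
      intro y
      have hwLip : ∀ x y', (fun z => u n z + u k xb) x - (fun z => u n z + u k xb) y' ≤ d x y' := by
        intro x y'
        simpa using huLip n x y'
      have h1 : ∀ z, u (k + n) z ≤ (fun z => u n z + u k xb) z := fun z => by
        have := ih z; simpa using by linarith
      have h2 : shapley A B T (u (k + n)) y ≤ shapley A B T (fun z => u n z + u k xb) y :=
        hSmono _ _ (huLip _) hwLip h1 y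
      have h3 : shapley A B T (fun z => u n z + u k xb) y = shapley A B T (u n) y + u k xb :=
        hSconst (u n) (huLip n) (u k xb) y
      calc u (k + (n + 1)) y = shapley A B T (u (k + n)) y := by
            rw [show k + (n + 1) = (k + n) + 1 from rfl, huS]
        _ ≤ shapley A B T (fun z => u n z + u k xb) y := h2
        _ = shapley A B T (u n) y + u k xb := h3
        _ = u k xb + u (n + 1) y := by rw [huS n]; ring
  have hsubadd : Subadditive (fun n => u n xb) := by
    intro m n
    have := hgen m n xb
    linarith
  have hulb : ∀ k : ℕ, -(k * R xb) ≤ u k xb := by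
    intro k
    induction k with
    | zero => simp [hu_def, hdxx]
    | succ n ih =>
      have h1 := hSlb (u n) (huLip n) xb
      rw [huS]
      push_cast
      have := hR0 xb
      linarith
  have hbddDiv : BddBelow (Set.range fun n : ℕ => u n xb / n) := by
    refine ⟨-R xb, ?_⟩
    rintro y ⟨n, rfl⟩
    rcases Nat.eq_zero_or_pos n with h | h
    · subst h
      simp [hu_def, hdxx, hR0 xb, neg_nonpos]
    · have hn : (0 : ℝ) < n := by exact_mod_cast h
      rw [le_div_iff₀ hn]
      have h2 : -R xb * n = -(n * R xb) := by ring
      have := hulb n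
      linarith
  have hρlim : ρ = hsubadd.lim := tendsto_nhds_unique hρ (hsubadd.tendsto_lim hbddDiv)
  have ha_nonneg : ∀ k : ℕ, 0 ≤ u k xb - k * ρ := by
    intro k
    rcases Nat.eq_zero_or_pos k with h | h
    · subst h
      simp [hu_def, hdxx]
    · have hk : (0 : ℝ) < k := by exact_mod_cast h
      have h1 : hsubadd.lim ≤ u k xb / k := hsubadd.lim_le_div hbddDiv (Nat.pos_iff_ne_zero.1 h)
      rw [← hρlim, le_div_iff₀ hk] at h1
      have h2 : (k : ℝ) * ρ = ρ * k := by ring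
      linarith
  -- the recentered sequence and its running maximum
  set a : ℕ → ℝ := fun k => u k xb - k * ρ with ha_def
  have ha0 : a 0 = 0 := by simp [ha_def, hu_def, hdxx]
  set M : ℕ → ℝ := fun k => (Finset.range (k + 1)).sup' Finset.nonempty_range_add_one a with hM_def
  have haM : ∀ k, a k ≤ M k := fun k => Finset.le_sup' a (Finset.self_mem_range_succ k)
  have hM0 : ∀ k, 0 ≤ M k := by
    intro k
    have h1 : a 0 ≤ M k := Finset.le_sup' a (Finset.mem_range.2 (Nat.succ_pos k))
    linarith [ha0 ▸ h1]
  have hMmono : Monotone M := by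
    apply monotone_nat_of_le_succ
    intro n
    apply Finset.sup'_le
    intro j hj
    exact Finset.le_sup' a (Finset.mem_range.2 (by
      have := Finset.mem_range.1 hj
      omega))
  have hMle : ∀ {k j : ℕ}, j ≤ k → a j ≤ M k := by
    intro k j hjk
    exact Finset.le_sup' a (Finset.mem_range.2 (by omega))
  -- frequently, a k is close to its running maximum
  have hfreq : ∃ c : ℝ, ∀ K : ℕ, ∃ k, K ≤ k ∧ c ≤ a k - M k := by
    by_cases hbdd : ∃ C : ℝ, ∀ k, a k ≤ C
    · obtain ⟨C, hC⟩ := hbdd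
      refine ⟨-C, fun K => ⟨K, le_refl K, ?_⟩⟩
      have h1 : M K ≤ C := Finset.sup'_le _ a fun j _ => hC j
      have h2 : 0 ≤ a K := ha_nonneg K
      linarith
    · push_neg at hbdd
      refine ⟨0, fun K => ?_⟩
      obtain ⟨k', hk'⟩ := hbdd (M K)
      have hP : ∃ k, M K < a k := ⟨k', hk'⟩
      have hfind : M K < a (Nat.find hP) := Nat.find_spec hP
      have hmin : ∀ j < Nat.find hP, ¬ M K < a j := fun j hj => Nat.find_min hP hj
      have hKk : K ≤ Nat.find hP := by
        by_contra hlt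
        push_neg at hlt
        have h1 : a (Nat.find hP) ≤ M K := hMle (by omega)
        linarith
      have hMk : M (Nat.find hP) ≤ a (Nat.find hP) := by
        apply Finset.sup'_le
        intro j hj
        have hj' : j ≤ Nat.find hP := by
          have := Finset.mem_range.1 hj
          omega
        rcases eq_or_lt_of_le hj' with h | h
        · rw [h]
        · have h2 := hmin j h
          push_neg at h2
          linarith
      exact ⟨Nat.find hP, hKk, by linarith [haM (Nat.find hP)]⟩
  obtain ⟨c, hfreq⟩ := hfreq
  -- the normalized functions g k and their limsup v
  set g : ℕ → X → ℝ := fun k y => u k y - k * ρ - M k with hg_def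
  have hgLip : ∀ (k) (x y : X), g k x - g k y ≤ d x y := by
    intro k x y
    have := huLip k x y
    simp only [hg_def]
    linarith
  have hg_ub : ∀ (k) (y : X), g k y ≤ d y xb := by
    intro k y
    have h1 := huLip k y xb
    have h2 : u k xb - k * ρ ≤ M k := haM k
    simp only [hg_def]
    linarith
  have hg_lb : ∀ (k) (y : X), (a k - M k) - d xb y ≤ g k y := by
    intro k y
    have h1 := huLip k xb y
    have h2 : a k = u k xb - k * ρ := rfl
    simp only [hg_def]
    linarith
  have hgB : ∀ y : X, IsBoundedUnder (· ≤ ·) atTop (fun k => g k y) := fun y =>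
    isBoundedUnder_of ⟨d y xb, fun k => hg_ub k y⟩
  have hfreqg : ∀ (y : X) (m : ℕ), ∃ᶠ k in atTop, c - d xb y ≤ g (k + m) y := by
    intro y m
    rw [Filter.frequently_atTop]
    intro K
    obtain ⟨k, hk1, hk2⟩ := hfreq (K + m)
    refine ⟨k - m, by omega, ?_⟩
    have hkm : k - m + m = k := by omega
    rw [hkm]
    have := hg_lb k y
    linarith
  have hgC : ∀ y : X, IsCoboundedUnder (· ≤ ·) atTop (fun k => g k y) := by
    intro y
    apply Filter.IsCoboundedUnder.of_frequently_ge (a := c - d xb y)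
    simpa using hfreqg y 0
  set v : X → ℝ := fun y => Filter.limsup (fun k => g k y) atTop with hv_def
  have hvLip : ∀ x y, v x - v y ≤ d x y := by
    intro x y
    rw [sub_le_iff_le_add]
    have hB' : IsBoundedUnder (· ≤ ·) atTop (fun k => g k y + d x y) :=
      isBoundedUnder_of ⟨d y xb + d x y, fun k => by linarith [hg_ub k y]⟩
    have h1 : Filter.limsup (fun k => g k x) atTop ≤
        Filter.limsup (fun k => g k y + d x y) atTop :=
      Filter.limsup_le_limsup
        (Filter.Eventually.of_forall fun k =>
          show g k x ≤ g k y + d x y by linarith [hgLip k x y]) (hgC x) hB'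
    have h2 : Filter.limsup (fun k => g k y + d x y) atTop =
        Filter.limsup (fun k => g k y) atTop + d x y :=
      limsup_add_const atTop (fun k => g k y) (d x y) (hgB y) (hgC y)
    rw [h2] at h1
    show Filter.limsup (fun k => g k x) atTop ≤ d x y + Filter.limsup (fun k => g k y) atTop
    linarith
  -- the key inequality : S v ≥ v + ρ
  have hkey : ∀ x : X, v x + ρ ≤ shapley A B T v x := by
    intro x
    refine hleS v x _ fun aa => ?_
    set s : ℕ → ℝ := fun k => ⨆ b : B, g k (T aa b x) with hs_def
    -- step (i) : one-step inequality for the normalized iterates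
    have hs_lb : ∀ k, g (k + 1) x + ρ ≤ s k := by
      intro k
      have hs1 : u (k + 1) x ≤ ⨆ b : B, u k (T aa b x) := by
        rw [huS]
        exact hSle (u k) (huLip k) x aa
      have hs2 : s k = (⨆ b : B, u k (T aa b x)) + (-(k * ρ) - M k) := by
        have hfe : (fun b : B => g k (T aa b x)) =
            fun b : B => (u k (T aa b x) + (-(k * ρ) - M k)) := by
          funext b
          simp only [hg_def]
          ring
        rw [hs_def]
        simp only [hfe]
        exact ciSup_addc (hBddA (u k) (huLip k) x aa) _
      have hs3 : M k ≤ M (k + 1) := hMmono (Nat.le_succ k)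
      have hs4 : g (k + 1) x = u (k + 1) x - (k + 1 : ℕ) * ρ - M (k + 1) := rfl
      rw [hs4]
      push_cast
      linarith
    -- boundedness of s
    have hDz : ∀ b ∈ B, dist (T (aa : E) b x) xb ≤ R x + dist x xb := by
      intro b hb
      calc dist (T (aa : E) b x) xb ≤ dist (T (aa : E) b x) x + dist x xb := dist_triangle _ _ _
        _ ≤ R x + dist x xb := by linarith [hRb x aa aa.2 b hb]
    have hsUB : ∀ k, s k ≤ R x + dist x xb := by
      intro k
      refine ciSup_le fun b => ?_
      have h1 := hg_ub k (T aa b x)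
      have h2 : d (T (aa : E) b x) xb ≤ dist (T (aa : E) b x) xb := hdd _ _
      linarith [hDz b b.2]
    have hsLB : ∀ k, (a k - M k) - (R x + dist x xb) ≤ s k := by
      intro k
      have h1 : g k (T (aa : E) b₀ x) ≤ s k := le_ciSup (hBddA (g k) (hgLip k) x aa) ⟨b₀, hb₀⟩
      have h2 := hg_lb k (T (aa : E) b₀ x)
      have h3 : d xb (T (aa : E) b₀ x) ≤ dist (T (aa : E) b₀ x) xb := hdd' _ _
      linarith [hDz b₀ hb₀]
    have hsB : IsBoundedUnder (· ≤ ·) atTop s := isBoundedUnder_of ⟨R x + dist x xb, hsUB⟩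
    have hsFreq : ∃ᶠ k in atTop, c - (R x + dist x xb) ≤ s k := by
      rw [Filter.frequently_atTop]
      intro K
      obtain ⟨k, hk1, hk2⟩ := hfreq K
      exact ⟨k, hk1, by linarith [hsLB k]⟩
    have hsC : IsCoboundedUnder (· ≤ ·) atTop s :=
      Filter.IsCoboundedUnder.of_frequently_ge hsFreq
    -- step (iii) : v x + ρ ≤ limsup s
    have hstep3 : v x + ρ ≤ Filter.limsup s atTop := by
      have hBshift : IsBoundedUnder (· ≤ ·) atTop (fun k => g (k + 1) x) :=
        isBoundedUnder_of ⟨d x xb, fun k => hg_ub (k + 1) x⟩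
      have hCshift : IsCoboundedUnder (· ≤ ·) atTop (fun k => g (k + 1) x) :=
        Filter.IsCoboundedUnder.of_frequently_ge (hfreqg x 1)
      have hCshift' : IsCoboundedUnder (· ≤ ·) atTop (fun k => g (k + 1) x + ρ) := by
        apply Filter.IsCoboundedUnder.of_frequently_ge (a := (c - d xb x) + ρ)
        exact (hfreqg x 1).mono fun k hk => by linarith
      have h1 : Filter.limsup (fun k => g (k + 1) x + ρ) atTop ≤ Filter.limsup s atTop :=
        Filter.limsup_le_limsup (Filter.Eventually.of_forall fun k => hs_lb k) hCshift' hsB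
      have h2 : Filter.limsup (fun k => g (k + 1) x + ρ) atTop =
          Filter.limsup (fun k => g (k + 1) x) atTop + ρ :=
        limsup_add_const atTop (fun k => g (k + 1) x) ρ hBshift hCshift
      have h3 : Filter.limsup (fun k => g (k + 1) x) atTop =
          Filter.limsup (fun k => g k x) atTop :=
        Filter.limsup_nat_add (fun k => g k x) 1
      have h4 : v x = Filter.limsup (fun k => g k x) atTop := rfl
      rw [h4, ← h3, ← h2]
      exact h1
    -- step (iv) : limsup s ≤ ⨆ b, v (T aa b x), using compactness
    have hstep4 : Filter.limsup s atTop ≤ ⨆ b : B, v (T aa b x) := by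
      set Λ := Filter.limsup s atTop with hΛ_def
      set bigK := {z | ∃ a' ∈ A, ∃ b ∈ B, ∃ x' ∈ ({x} : Set X), z = T a' b x'} with hbigK_def
      have hbigK : IsCompact bigK := hcomp _ isCompact_singleton
      -- step 1 : frequently near-optimal choices
      have hPj : ∀ j : ℕ, ∃ k, j ≤ k ∧ ∃ bb, bb ∈ B ∧
          Λ - 1 / (j + 1) < g k (T aa bb x) := by
        intro j
        have hεj : (0 : ℝ) < 1 / (j + 1) := by positivity
        have hlt : Λ - 1 / (j + 1) < Λ := by linarith
        have hfr := Filter.frequently_lt_of_lt_limsup hsC hlt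
        rw [Filter.frequently_atTop] at hfr
        obtain ⟨k, hk1, hk2⟩ := hfr j
        obtain ⟨b, hbb⟩ := exists_lt_of_lt_ciSup hk2
        exact ⟨k, hk1, b, b.2, hbb⟩
      choose k hk bb hbB hgb using hPj
      set z : ℕ → X := fun j => T aa (bb j) x with hz_def
      have hzK : ∀ j, z j ∈ bigK := fun j => ⟨(aa : E), aa.2, bb j, hbB j, x, rfl, rfl⟩
      obtain ⟨ys, hysK, φ, hφmono, hφtendsto⟩ := hbigK.tendsto_subseq hzK
      -- step 2 : v ys ≥ Λ
      have hvy : Λ ≤ v ys := by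
        refine le_of_forall_pos_le_add fun ε hε => ?_
        have hfr : ∃ᶠ n in atTop, Λ - ε ≤ g n ys := by
          rw [Filter.frequently_atTop]
          intro N
          obtain ⟨N₀, hN₀⟩ := Metric.tendsto_atTop.1 hφtendsto (ε / 2) (by positivity)
          obtain ⟨m, hm⟩ := exists_nat_gt (2 / ε)
          set i := max N (max N₀ m) with hi_def
          have hiN : N ≤ i := le_max_left _ _
          have hiN₀ : N₀ ≤ i := (le_max_left _ _).trans (le_max_right _ _)
          have him : m ≤ i := (le_max_right _ _).trans (le_max_right _ _)
          refine ⟨k (φ i), le_trans hiN (le_trans hφmono.le_apply (hk (φ i))), ?_⟩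
          · have hd1 : dist (z (φ i)) ys < ε / 2 := hN₀ i hiN₀
            have hd2 : g (k (φ i)) (z (φ i)) - g (k (φ i)) ys ≤ dist (z (φ i)) ys :=
              (hgLip _ _ _).trans (hdd _ _)
            have hd3 : Λ - 1 / (φ i + 1) < g (k (φ i)) (z (φ i)) := hgb (φ i)
            have hp : (2 / ε : ℝ) < (φ i : ℝ) + 1 := by
              have h5 : (m : ℝ) ≤ (φ i : ℝ) := by
                exact_mod_cast le_trans him (hφmono.le_apply)
              linarith
            have hp0 : (0 : ℝ) < (φ i : ℝ) + 1 := by positivity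
            have hfi : 1 / ((φ i : ℝ) + 1) ≤ ε / 2 := by
              rw [div_le_div_iff₀ hp0 (by norm_num : (0:ℝ) < 2)]
              have := (div_lt_iff₀ hε).1 hp
              nlinarith
            show Λ - ε ≤ g (k (φ i)) ys
            clear_value z i Λ s g v M u
            linarith
        have := Filter.le_limsup_of_frequently_le hfr (hgB ys)
        have h4 : v ys = Filter.limsup (fun n => g n ys) atTop := rfl
        rw [h4]
        linarith
      -- step 3 : transfer to the supremum over b
      refine le_of_forall_pos_le_add fun ε hε => ?_
      obtain ⟨N₀, hN₀⟩ := Metric.tendsto_atTop.1 hφtendsto ε hε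
      have hd1 : dist (z (φ N₀)) ys < ε := hN₀ N₀ (le_refl _)
      have hv1 : v ys - v (z (φ N₀)) ≤ dist (z (φ N₀)) ys := by
        have := hvLip ys (z (φ N₀))
        have h2 : d ys (z (φ N₀)) ≤ dist (z (φ N₀)) ys := hdd' _ _
        linarith
      have hv2 : v (z (φ N₀)) ≤ ⨆ b : B, v (T aa b x) :=
        le_ciSup (hBddA v hvLip x aa) ⟨bb (φ N₀), hbB (φ N₀)⟩
      linarith
    linarith [hstep3, hstep4]
  -- upper bound : any r in the set satisfies r ≤ ρ
  have hub : ∀ r : ℝ, (∃ w : X → ℝ, (∀ x y, w x - w y ≤ d x y) ∧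
      IsGLB {s : ℝ | ∃ x : X, s = shapley A B T w x - w x} r) → r ≤ ρ := by
    rintro r ⟨w, hwLip, hwglb⟩
    have hlow : ∀ x : X, r ≤ shapley A B T w x - w x := fun x => hwglb.1 ⟨x, rfl⟩
    have hitLip : ∀ k : ℕ, ∀ x y,
        (shapley A B T)^[k] w x - (shapley A B T)^[k] w y ≤ d x y := by
      intro k
      induction k with
      | zero =>
        intro x y
        simpa using hwLip x y
      | succ n ih =>
        intro x y
        rw [Function.iterate_succ_apply']
        exact hSLip _ ih x y
    have hclaim1 : ∀ k : ℕ, ∀ x : X, w x + k * r ≤ (shapley A B T)^[k] w x := by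
      intro k
      induction k with
      | zero =>
        intro x
        simp
      | succ n ih =>
        intro x
        have h2 : shapley A B T (fun z => w z + (n : ℝ) * r) x ≤
            shapley A B T ((shapley A B T)^[n] w) x := by
          refine hSmono _ _ (fun x' y' => ?_) (hitLip n) (fun y => ih y) x
          show w x' + (n : ℝ) * r - (w y' + (n : ℝ) * r) ≤ d x' y'
          linarith [hwLip x' y']
        have h3 : shapley A B T (fun z => w z + (n : ℝ) * r) x =
            shapley A B T w x + (n : ℝ) * r := hSconst w hwLip _ x
        have h4 := hlow x
        rw [Function.iterate_succ_apply']
        push_cast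
        linarith
    have hclaim2 : ∀ k : ℕ, ∀ x : X, (shapley A B T)^[k] w x ≤ u k x + w xb := by
      intro k
      induction k with
      | zero =>
        intro x
        have h1 := hwLip x xb
        have h2 : u 0 x = d x xb := by simp [hu_def]
        rw [Function.iterate_zero_apply, h2]
        linarith
      | succ n ih =>
        intro x
        have h1 : shapley A B T ((shapley A B T)^[n] w) x ≤
            shapley A B T (fun y => u n y + w xb) x := by
          refine hSmono _ _ (hitLip n) (fun x' y' => ?_) ih x
          show u n x' + w xb - (u n y' + w xb) ≤ d x' y'
          linarith [huLip n x' y']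
        have h2 : shapley A B T (fun y => u n y + w xb) x =
            shapley A B T (u n) x + w xb := hSconst (u n) (huLip n) _ x
        rw [Function.iterate_succ_apply', huS n]
        linarith
    have hkr : ∀ k : ℕ, 1 ≤ k → r ≤ u k xb / k := by
      intro k hk
      have h1 := hclaim1 k xb
      have h2 := hclaim2 k xb
      have hkpos : (0 : ℝ) < k := by exact_mod_cast hk
      rw [le_div_iff₀ hkpos]
      have h3 : r * (k : ℝ) = (k : ℝ) * r := mul_comm _ _
      linarith
    exact ge_of_tendsto hρ (Filter.eventually_atTop.2 ⟨1, fun k hk => hkr k hk⟩)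
  -- conclusion
  have x₀ : X := Classical.arbitrary X
  have hne : {s : ℝ | ∃ x : X, s = shapley A B T v x - v x}.Nonempty :=
    ⟨shapley A B T v x₀ - v x₀, x₀, rfl⟩
  have hbddb : BddBelow {s : ℝ | ∃ x : X, s = shapley A B T v x - v x} := by
    refine ⟨ρ, ?_⟩
    rintro s ⟨x, rfl⟩
    linarith [hkey x]
  have hglb := isGLB_csInf hne hbddb
  have h1 : ρ ≤ sInf {s : ℝ | ∃ x : X, s = shapley A B T v x - v x} := by
    apply le_csInf hne
    rintro s ⟨x, rfl⟩
    linarith [hkey x]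
  have h2 : sInf {s : ℝ | ∃ x : X, s = shapley A B T v x - v x} ≤ ρ :=
    hub _ ⟨v, hvLip, hglb⟩
  have heq : sInf {s : ℝ | ∃ x : X, s = shapley A B T v x - v x} = ρ :=
    le_antisymm h2 h1
  constructor
  · exact ⟨v, hvLip, heq ▸ hglb⟩
  · rintro r ⟨w, hw1, hw2⟩
    exact hub r ⟨w, hw1, hw2⟩
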